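/- If A is a k×n real matrix of rank k all of whose k×k minors are nonnegative, then the τ-function τ_A(x,y,t) = Σ_I Δ_I(A) E_I(x,y,t) is strictly positive for all (x,y,t) ∈ ℝ³. -/

import Mathlib

open Matrix

/-- The maximal minor of a `k × n` matrix `A` with column set `S` (ordered increasingly);
defined to be `0` if `S` does not have exactly `k` elements. -/
noncomputable def minor {k n : ℕ} (A : Matrix (Fin k) (Fin n) ℝ) (S : Finset (Fin n)) : ℝ :=
  if h : S.card = k then (A.submatrix id (S.orderEmbOfFin h)).det else 0

/-- The Vandermonde-type constant `∏_{l<m, in I}(κ_{j_m} − κ_{j_l})` times `∏_{j∈I} E_j`. -/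
noncomputable def EI {n : ℕ} (κ : Fin n → ℝ) (I : Finset (Fin n)) (x y t : ℝ) : ℝ :=
  (∏ a ∈ I, ∏ b ∈ I.filter (fun b => a < b), (κ b - κ a)) *
    ∏ j ∈ I, Real.exp (κ j * x + κ j ^ 2 * y + κ j ^ 3 * t)

lemma EI_pos {n : ℕ} (κ : Fin n → ℝ) (hκ : StrictMono κ) (I : Finset (Fin n)) (x y t : ℝ) :
    0 < EI κ I x y t := by
  unfold EI
  apply mul_pos
  · apply Finset.prod_pos
    intro a _
    apply Finset.prod_pos
    intro b hb
    simp only [Finset.mem_filter] at hb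
    exact sub_pos.mpr (hκ hb.2)
  · exact Finset.prod_pos fun j _ => Real.exp_pos _

lemma exists_minor_ne (n k : ℕ) (A : Matrix (Fin k) (Fin n) ℝ) (hrank : A.rank = k) :
    ∃ S : Finset (Fin n), S.card = k ∧ minor A S ≠ 0 := by
  classical
  have hspan : Submodule.span ℝ (Set.range Aᵀ) = ⊤ := by
    apply Submodule.eq_top_of_finrank_eq
    rw [show Set.range Aᵀ = Set.range A.col from rfl, ← Matrix.rank_eq_finrank_span_cols, hrank, Module.finrank_pi]
    simp
  obtain ⟨b, hb_sub, hb_span, hb_li⟩ := exists_linearIndependent ℝ (Set.range Aᵀ)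
  rw [hspan] at hb_span
  have hbfin : b.Finite := (Set.finite_range Aᵀ).subset hb_sub
  haveI := hbfin.fintype
  let B : Module.Basis b ℝ (Fin k → ℝ) :=
    Module.Basis.mk hb_li (by rw [Subtype.range_coe]; exact hb_span.ge)
  have hcard : Fintype.card b = k := by
    have h1 := Module.finrank_eq_card_basis B
    rw [Module.finrank_pi] at h1
    simpa using h1.symm
  have hc : ∀ v : b, ∃ j : Fin n, Aᵀ j = (v : Fin k → ℝ) := fun v => hb_sub v.2
  choose f hf using hc
  have hfinj : Function.Injective f := by
    intro v w h
    apply Subtype.ext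
    rw [← hf v, ← hf w, h]
  refine ⟨Finset.univ.image f, ?_, ?_⟩
  · rw [Finset.card_image_of_injective _ hfinj, Finset.card_univ, hcard]
  · have hS : (Finset.univ.image f).card = k := by
      rw [Finset.card_image_of_injective _ hfinj, Finset.card_univ, hcard]
    unfold minor
    rw [dif_pos hS]
    set g := (Finset.univ.image f).orderEmbOfFin hS with hg
    have hmem : ∀ j : Fin k, ∃ v : b, f v = g j := by
      intro j
      have := (Finset.univ.image f).orderEmbOfFin_mem hS j
      rw [Finset.mem_image] at this
      obtain ⟨v, _, hv⟩ := this
      exact ⟨v, hv⟩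
    choose e he using hmem
    have heinj : Function.Injective e := by
      intro j j' h
      have : g j = g j' := by rw [← he j, ← he j', h]
      exact g.injective this
    have hli : LinearIndependent ℝ (fun j : Fin k => (A.submatrix id g)ᵀ j) := by
      have : (fun j : Fin k => (A.submatrix id g)ᵀ j) =
          (fun v : b => (v : Fin k → ℝ)) ∘ e := by
        funext j
        have : Aᵀ (g j) = (e j : Fin k → ℝ) := by rw [← he j]; exact hf (e j)
        exact this
      rw [this]
      exact hb_li.comp e heinj
    have := Matrix.linearIndependent_cols_iff_isUnit.mp hli
    have := (Matrix.isUnit_iff_isUnit_det _).mp this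
    exact isUnit_iff_ne_zero.mp this

/-- If `A` is a real `k × n` matrix of rank `k` all of whose `k × k` minors are
nonnegative, then the τ-function `τ_A(x,y,t) = Σ_I Δ_I(A) E_I(x,y,t)` is strictly positive
on all of `ℝ³`. -/
theorem tau_pos_of_tnn (n k : ℕ) (κ : Fin n → ℝ) (hκ : StrictMono κ)
    (A : Matrix (Fin k) (Fin n) ℝ) (hrank : A.rank = k)
    (hnn : ∀ S : Finset (Fin n), 0 ≤ minor A S) (x y t : ℝ) :
    0 < ∑ I ∈ Finset.powersetCard k (Finset.univ : Finset (Fin n)),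
          minor A I * EI κ I x y t := by
  obtain ⟨S, hS, hmin⟩ := exists_minor_ne n k A hrank
  have hSmem : S ∈ Finset.powersetCard k (Finset.univ : Finset (Fin n)) := by
    rw [Finset.mem_powersetCard]
    exact ⟨Finset.subset_univ _, hS⟩
  apply Finset.sum_pos'
  · intro I _
    exact mul_nonneg (hnn I) (EI_pos κ hκ I x y t).le
  · exact ⟨S, hSmem, mul_pos ((hnn S).lt_of_ne (Ne.symm hmin)) (EI_pos κ hκ S x y t)⟩
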